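/- Let n ≥ 3 and let a = (a_1,…,a_n) be a vector of nonnegative integers such that a_j ≥ a_{j−1} − a_{j−2} + ⋯ + (−1)^{i−1} a_{j−i} + ⋯ + (−1)^{j−2} a_1 for each j = 2, …, n−1, and a_n ≤ a_{n−1} − a_{n−2} + ⋯ + (−1)^{i−1} a_{n−i} + ⋯ + (−1)^{n−2} a_1. Suppose y = (y_1,…,y_{n−1}) is a vector of nonnegative real numbers satisfying y_1 ≤ a_1, y_{j−1} + y_j ≤ a_j for each j = 2, …, n−1, and y_{n−1} ≤ a_n. Let h = ⌈y_1 + ⋯ + y_{n−1}⌉. Then the monomial x^a = x_1^{a_1} ⋯ x_n^{a_n} is divisible by a product of h monomials from the set {x_1 x_2, x_2 x_3, …, x_{n−1} x_n}. -/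

import Mathlib

open MvPolynomial

lemma chain_dvd {M : Type*} [CommSemiring M] (g : ℕ → M) :
    ∀ (n : ℕ) (c a : ℕ → ℕ), c 0 = 0 → (∀ j, n ≤ j → c j = 0) →
    (∀ j, 1 ≤ j → j ≤ n → c (j - 1) + c j ≤ a j) →
    (∏ i ∈ Finset.Icc 1 (n - 1), (g i * g (i + 1)) ^ c i) ∣
      ∏ i ∈ Finset.Icc 1 n, g i ^ a i := by
  intro n
  induction n with
  | zero => intro c a h0 hn h; simp
  | succ n ih =>
    intro c a h0 hn h
    rcases Nat.eq_zero_or_pos n with rfl | hn1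
    · simp
    · obtain ⟨k, rfl⟩ : ∃ k, n = k + 1 := ⟨n - 1, by omega⟩
      have hccn : c k + c (k + 1) ≤ a (k + 1) := by
        simpa using h (k + 1) (by omega) (by omega)
      have hck2 : c (k + 2) = 0 := hn _ le_rfl
      have hcn1 : c (k + 1) ≤ a (k + 2) := by
        have := h (k + 2) (by omega) le_rfl
        simpa [hck2] using this
      have ihd := ih (fun j => if j = k + 1 then 0 else c j)
        (fun j => if j = k + 1 then a (k + 1) - c (k + 1) else a j)
        (by simp [h0]) (by
          intro j hj
          by_cases hjn : j = k + 1
          · simp [hjn]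
          · simp only [hjn, if_false]
            exact hn j (by omega))
        (by
          intro j hj1 hjn
          by_cases hjn' : j = k + 1
          · subst hjn'
            simp only [Nat.add_sub_cancel, show (k:ℕ) ≠ k + 1 by omega, if_false,
              if_true, eq_self_iff_true]
            omega
          · have h1 : j - 1 ≠ k + 1 := by omega
            simp only [hjn', if_false, h1]
            exact h j hj1 (by omega))
      simp only [Nat.add_sub_cancel] at ihd ⊢
      have hL : ∏ i ∈ Finset.Icc 1 (k + 1), (g i * g (i + 1)) ^ c i
          = (∏ i ∈ Finset.Icc 1 k,
              (g i * g (i + 1)) ^ (if i = k + 1 then 0 else c i)) *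
            (g (k + 1) * g (k + 2)) ^ c (k + 1) := by
        rw [Finset.prod_Icc_succ_top (by omega)]
        congr 1
        apply Finset.prod_congr rfl
        intro i hi
        simp only [Finset.mem_Icc] at hi
        rw [if_neg (by omega)]
      have hR : ∏ i ∈ Finset.Icc 1 (k + 2), g i ^ a i
          = ((∏ i ∈ Finset.Icc 1 (k + 1),
              g i ^ (if i = k + 1 then a (k + 1) - c (k + 1) else a i)) *
             (g (k + 1) * g (k + 2)) ^ c (k + 1)) *
            g (k + 2) ^ (a (k + 2) - c (k + 1)) := by
        rw [Finset.prod_Icc_succ_top (by omega), Finset.prod_Icc_succ_top (by omega),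
          Finset.prod_Icc_succ_top (show 1 ≤ k + 1 by omega)]
        rw [if_pos rfl]
        have hcong : ∏ i ∈ Finset.Icc 1 k,
            g i ^ (if i = k + 1 then a (k + 1) - c (k + 1) else a i)
            = ∏ i ∈ Finset.Icc 1 k, g i ^ a i := by
          apply Finset.prod_congr rfl
          intro i hi
          simp only [Finset.mem_Icc] at hi
          rw [if_neg (by omega)]
        rw [hcong]
        have e1 : a (k + 1) = (a (k + 1) - c (k + 1)) + c (k + 1) := by omega
        have e2 : a (k + 2) = c (k + 1) + (a (k + 2) - c (k + 1)) := by omega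
        rw [mul_pow]
        nth_rewrite 1 [e1]
        nth_rewrite 1 [e2]
        rw [pow_add, pow_add]
        ring
      rw [hL, hR]
      exact (mul_dvd_mul_right ihd ((g (k + 1) * g (k + 2)) ^ c (k + 1))).mul_right _

/-- Lemma 4.5(2): let `n ≥ 3` and `a = (a_1,…,a_n)` nonnegative integers with
`a_j ≥ a_{j-1} - a_{j-2} + ⋯ + (-1)^{j-2} a_1` for `j = 2,…,n-1` and
`a_n ≤ a_{n-1} - a_{n-2} + ⋯ + (-1)^{n-2} a_1`. If `y = (y_1,…,y_{n-1})` are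
nonnegative reals with `y_1 ≤ a_1`, `y_{j-1} + y_j ≤ a_j` for `j = 2,…,n-1`, and
`y_{n-1} ≤ a_n`, and `h = ⌈y_1 + ⋯ + y_{n-1}⌉`, then `x^a` is divisible by a product
of `h` monomials from `{x_1 x_2, …, x_{n-1} x_n}`. -/
theorem divisible_of_alternating_conditions_short'
    (K : Type*) [Field K] (n : ℕ) (hn : 3 ≤ n)
    (a : ℕ → ℕ) (y : ℕ → ℝ)
    (ha1 : ∀ j ∈ Finset.Icc 2 (n - 1),
      (∑ i ∈ Finset.Icc 1 (j - 1), (-1 : ℤ) ^ (i - 1) * (a (j - i) : ℤ)) ≤ (a j : ℤ))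
    (ha2 : (a n : ℤ) ≤ ∑ i ∈ Finset.Icc 1 (n - 1), (-1 : ℤ) ^ (i - 1) * (a (n - i) : ℤ))
    (hy0 : ∀ i ∈ Finset.Icc 1 (n - 1), 0 ≤ y i)
    (hy1 : y 1 ≤ (a 1 : ℝ))
    (hy2 : ∀ j ∈ Finset.Icc 2 (n - 1), y (j - 1) + y j ≤ (a j : ℝ))
    (hy3 : y (n - 1) ≤ (a n : ℝ)) :
    ∃ c : ℕ → ℕ,
      (∑ i ∈ Finset.Icc 1 (n - 1), c i = ⌈∑ i ∈ Finset.Icc 1 (n - 1), y i⌉₊) ∧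
      (∏ i ∈ Finset.Icc 1 (n - 1), ((X i * X (i + 1) : MvPolynomial ℕ K) ^ c i)) ∣
        ∏ i ∈ Finset.Icc 1 n, (X i : MvPolynomial ℕ K) ^ a i := by
  set S : ℕ → ℝ := fun j => ∑ i ∈ Finset.Icc 1 j, y i with hS
  set C : ℕ → ℕ := fun j => ⌈S (min j (n - 1))⌉₊ with hC
  set c : ℕ → ℕ := fun j => C j - C (j - 1) with hc
  have hS0 : S 0 = 0 := by simp [hS]
  have hSsucc : ∀ j : ℕ, S (j + 1) = S j + y (j + 1) := by
    intro j
    simp only [hS]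
    rw [Finset.sum_Icc_succ_top (by omega)]
  have hSnonneg : ∀ j, j ≤ n - 1 → 0 ≤ S j := by
    intro j hj
    apply Finset.sum_nonneg
    intro i hi
    simp only [Finset.mem_Icc] at hi
    exact hy0 i (Finset.mem_Icc.mpr ⟨hi.1, le_trans hi.2 hj⟩)
  have hCmono : Monotone C := by
    apply monotone_nat_of_le_succ
    intro j
    simp only [hC]
    apply Nat.ceil_le_ceil
    by_cases hj : n - 1 ≤ j
    · rw [min_eq_right hj, min_eq_right (by omega)]
    · rw [min_eq_left (by omega), min_eq_left (by omega)]
      rw [hSsucc j]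
      have : 0 ≤ y (j + 1) := hy0 _ (Finset.mem_Icc.mpr ⟨by omega, by omega⟩)
      linarith
  -- main estimate
  have hkey : ∀ j, 1 ≤ j → j ≤ n → C j ≤ a j + C (j - 2) := by
    intro j hj1 hjn
    have base : ∀ u v : ℕ, v ≤ n - 1 → u ≤ n - 1 → S u ≤ S v + (a j : ℝ) →
        ⌈S u⌉₊ ≤ a j + ⌈S v⌉₊ := by
      intro u v hv hu hle
      calc ⌈S u⌉₊ ≤ ⌈S v + (a j : ℝ)⌉₊ := Nat.ceil_le_ceil hle
        _ = ⌈S v⌉₊ + a j := Nat.ceil_add_natCast (hSnonneg v hv) _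
        _ = a j + ⌈S v⌉₊ := by omega
    rcases eq_or_lt_of_le hjn with rfl | hjlt
    · -- j = n (n has been substituted by j)
      have h1 : min j (j - 1) = j - 1 := by omega
      have h2 : min (j - 2) (j - 1) = j - 2 := by omega
      simp only [hC, h1, h2]
      apply base _ _ (by omega) (by omega)
      have hstep : S (j - 1) = S (j - 2) + y (j - 1) := by
        have := hSsucc (j - 2)
        rwa [show j - 2 + 1 = j - 1 by omega] at this
      rw [hstep]
      linarith
    · have hjn1 : j ≤ n - 1 := by omega
      have h1 : min j (n - 1) = j := by omega
      have h2 : min (j - 2) (n - 1) = j - 2 := by omega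
      simp only [hC, h1, h2]
      rcases eq_or_lt_of_le hj1 with rfl | hj2
      · -- j = 1
        apply base _ _ (by omega) (by omega)
        have : S 1 = y 1 := by simp [hS]
        rw [this, show (1:ℕ) - 2 = 0 by omega, hS0]
        linarith
      · -- 2 ≤ j
        apply base _ _ (by omega) (by omega)
        have e1 : S (j - 1) = S (j - 2) + y (j - 1) := by
          have := hSsucc (j - 2)
          rwa [show j - 2 + 1 = j - 1 by omega] at this
        have e2 : S j = S (j - 1) + y j := by
          have := hSsucc (j - 1)
          rwa [show j - 1 + 1 = j by omega] at this
        have := hy2 j (Finset.mem_Icc.mpr ⟨by omega, hjn1⟩)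
        rw [e2, e1]
        linarith
  have hc0 : c 0 = 0 := by simp [hc]
  have hcn : ∀ j, n ≤ j → c j = 0 := by
    intro j hj
    have h1 : min j (n - 1) = n - 1 := by omega
    have h2 : min (j - 1) (n - 1) = n - 1 := by omega
    simp [hc, hC, h1, h2]
  have hF2 : ∀ j, 1 ≤ j → j ≤ n → c (j - 1) + c j ≤ a j := by
    intro j hj1 hjn
    have e : j - 1 - 1 = j - 2 := by omega
    have m1 : C (j - 2) ≤ C (j - 1) := hCmono (by omega)
    have m2 : C (j - 1) ≤ C j := hCmono (by omega)
    have := hkey j hj1 hjn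
    simp only [hc, e]
    omega
  refine ⟨c, ?_, ?_⟩
  · -- sum equals ceiling
    have htel : ∀ m : ℕ, ∑ i ∈ Finset.Icc 1 m, c i = C m - C 0 := by
      intro m
      induction m with
      | zero => simp
      | succ m ihm =>
        rw [Finset.sum_Icc_succ_top (by omega), ihm]
        have m1 : C 0 ≤ C m := hCmono (by omega)
        have m2 : C m ≤ C (m + 1) := hCmono (by omega)
        simp only [hc, Nat.add_sub_cancel]
        omega
    rw [htel (n - 1)]
    have hC0 : C 0 = 0 := by simp [hC, hS0]
    have : C (n - 1) = ⌈∑ i ∈ Finset.Icc 1 (n - 1), y i⌉₊ := by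
      simp [hC, hS]
    omega
  · exact chain_dvd (fun i => (MvPolynomial.X i : MvPolynomial ℕ K)) n c a hc0 hcn hF2
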